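/- Let C ∈ ℝ^{N×N} be a symmetric CPD (or CND) matrix. Then for any matrices P, Q ∈ ℝ^{N×N} with Pᵀ 1_N = Qᵀ 1_N and P 1_N = Q 1_N, one has Tr(Pᵀ C Q C) ≤ (1/2)(Tr(Pᵀ C P C) + Tr(Qᵀ C Q C)). -/

import Mathlib

open Matrix


noncomputable def Hc (N : ℕ) : Matrix (Fin N) (Fin N) ℝ :=
  1 - (N : ℝ)⁻¹ • Matrix.of (fun _ _ => (1:ℝ))

lemma Hc_symm (N : ℕ) : (Hc N)ᵀ = Hc N := by
  ext i j
  simp [Hc, Matrix.transpose_apply, Matrix.one_apply, eq_comm]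

lemma mul_Hc {N : ℕ} (U : Matrix (Fin N) (Fin N) ℝ) (h : ∀ i, ∑ j, U i j = 0) :
    U * Hc N = U := by
  have hz : U * Matrix.of (fun _ _ => (1:ℝ)) = 0 := by
    ext i j
    simp [Matrix.mul_apply, h i]
  rw [Hc, Matrix.mul_sub, Matrix.mul_one, Matrix.mul_smul, hz, smul_zero, sub_zero]

lemma Hc_mul {N : ℕ} (U : Matrix (Fin N) (Fin N) ℝ) (h : ∀ j, ∑ i, U i j = 0) :
    Hc N * U = U := by
  have hz : Matrix.of (fun _ _ => (1:ℝ)) * U = 0 := by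
    ext i j
    simp [Matrix.mul_apply, h j]
  rw [Hc, Matrix.sub_mul, Matrix.one_mul, Matrix.smul_mul, hz, smul_zero, sub_zero]

lemma sum_Hc_mulVec {N : ℕ} (hN : 0 < N) (x : Fin N → ℝ) :
    ∑ i, (Hc N).mulVec x i = 0 := by
  have hN' : (N : ℝ) ≠ 0 := Nat.cast_ne_zero.mpr hN.ne'
  simp only [Hc, Matrix.mulVec, dotProduct, Matrix.sub_apply, Matrix.one_apply,
    Matrix.smul_apply, Matrix.of_apply, smul_eq_mul]
  simp [sub_mul, Finset.sum_sub_distrib, ite_mul, ← Finset.sum_mul]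
  rw [← Finset.mul_sum, ← mul_assoc, mul_inv_cancel₀ hN', one_mul, sub_self]

open scoped MatrixOrder in
lemma key_nonneg {N : ℕ} (D : Matrix (Fin N) (Fin N) ℝ) (hD : D.PosSemidef)
    (U : Matrix (Fin N) (Fin N) ℝ) : 0 ≤ Matrix.trace (Uᵀ * D * U * D) := by
  obtain ⟨S, hS, rfl⟩ : ∃ S : Matrix (Fin N) (Fin N) ℝ, Sᵀ = S ∧ S * S = D := by
    refine ⟨CFC.sqrt D, ?_, CFC.sqrt_mul_sqrt_self D hD.nonneg⟩
    have h := (CFC.sqrt_nonneg D).posSemidef.1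
    simpa [Matrix.IsHermitian, Matrix.conjTranspose_eq_transpose_of_trivial] using h
  have h1 : 0 ≤ Matrix.trace ((S*U*S)ᵀ * (S*U*S)) := by
    rw [Matrix.trace]
    apply Finset.sum_nonneg
    intro j _
    simp only [Matrix.diag_apply, Matrix.mul_apply, Matrix.transpose_apply]
    exact Finset.sum_nonneg fun k _ => mul_self_nonneg _
  have h2 : Uᵀ * (S*S) * U * (S*S) = (Uᵀ*(S*S)*U*S) * S := by
    simp [mul_assoc]
  rw [h2, Matrix.trace_mul_comm]
  have h3 : S * (Uᵀ*(S*S)*U*S) = (S*U*S)ᵀ * (S*U*S) := by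
    simp [Matrix.transpose_mul, hS, mul_assoc]
  rw [h3]
  exact h1

lemma cpd_psd {N : ℕ} (hN : 0 < N) (C : Matrix (Fin N) (Fin N) ℝ) (hsym : Cᵀ = C)
    (hpos : ∀ x : Fin N → ℝ, (∑ i, x i) = 0 → 0 ≤ x ⬝ᵥ C.mulVec x) :
    (Hc N * C * Hc N).PosSemidef := by
  refine Matrix.PosSemidef.of_dotProduct_mulVec_nonneg ?_ ?_
  · have ht : (Hc N * C * Hc N)ᵀ = Hc N * C * Hc N := by
      simp [Matrix.transpose_mul, Hc_symm, hsym, mul_assoc]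
    simpa [Matrix.IsHermitian, Matrix.conjTranspose_eq_transpose_of_trivial] using ht
  · intro x
    have key : (star x) ⬝ᵥ (Hc N * C * Hc N).mulVec x
        = (Hc N).mulVec x ⬝ᵥ C.mulVec ((Hc N).mulVec x) := by
      rw [star_trivial, ← Matrix.mulVec_mulVec, ← Matrix.mulVec_mulVec,
        dotProduct_mulVec, ← Matrix.mulVec_transpose, Hc_symm]
    rw [key]
    exact hpos _ (sum_Hc_mulVec hN x)

lemma trace_collapse {N : ℕ} (C U : Matrix (Fin N) (Fin N) ℝ)
    (hU1 : U * Hc N = U) (hU2 : Hc N * U = U)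
    (hU3 : Uᵀ * Hc N = Uᵀ) (hU4 : Hc N * Uᵀ = Uᵀ) :
    Matrix.trace (Uᵀ * (Hc N * C * Hc N) * U * (Hc N * C * Hc N))
      = Matrix.trace (Uᵀ * C * U * C) := by
  have e1 : Uᵀ * (Hc N * C * Hc N) * U = Uᵀ * C * U := by
    calc Uᵀ * (Hc N * C * Hc N) * U = (Uᵀ * Hc N) * C * (Hc N * U) := by
          simp [mul_assoc]
      _ = Uᵀ * C * U := by rw [hU3, hU2]
  rw [e1, Matrix.trace_mul_comm]
  have e2 : Hc N * C * Hc N * (Uᵀ * C * U) = Hc N * (C * Uᵀ * C * U) := by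
    calc Hc N * C * Hc N * (Uᵀ * C * U) = Hc N * C * ((Hc N * Uᵀ) * C * U) := by
          simp [mul_assoc]
      _ = Hc N * (C * Uᵀ * C * U) := by rw [hU4]; simp [mul_assoc]
  rw [e2, Matrix.trace_mul_comm]
  calc Matrix.trace (C * Uᵀ * C * U * Hc N)
      = Matrix.trace (C * Uᵀ * C * (U * Hc N)) := by simp [mul_assoc]
    _ = Matrix.trace (C * (Uᵀ * C * U)) := by rw [hU1]; simp [mul_assoc]
    _ = Matrix.trace (Uᵀ * C * U * C) := by rw [Matrix.trace_mul_comm]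

/-- trace inequality for CPD (or CND) matrices and matrices with
equal row and column marginals. -/
theorem stmt6 {N : ℕ} (C : Matrix (Fin N) (Fin N) ℝ) (hsym : Cᵀ = C)
    (hdef : (∀ x : Fin N → ℝ, (∑ i, x i) = 0 → 0 ≤ x ⬝ᵥ C.mulVec x) ∨
            (∀ x : Fin N → ℝ, (∑ i, x i) = 0 → x ⬝ᵥ C.mulVec x ≤ 0))
    (P Q : Matrix (Fin N) (Fin N) ℝ)
    (hcol : ∀ j, ∑ i, P i j = ∑ i, Q i j)
    (hrow : ∀ i, ∑ j, P i j = ∑ j, Q i j) :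
    Matrix.trace (Pᵀ * C * Q * C) ≤
      (1 / 2) * (Matrix.trace (Pᵀ * C * P * C) + Matrix.trace (Qᵀ * C * Q * C)) := by
  rcases Nat.eq_zero_or_pos N with hN | hN
  · subst hN
    simp [Matrix.trace]
  set U := P - Q with hU
  -- marginal facts
  have hrowU : ∀ i, ∑ j, U i j = 0 := by
    intro i; simp [hU, Matrix.sub_apply, Finset.sum_sub_distrib, hrow i]
  have hcolU : ∀ j, ∑ i, U i j = 0 := by
    intro j; simp [hU, Matrix.sub_apply, Finset.sum_sub_distrib, hcol j]
  have hU1 : U * Hc N = U := mul_Hc U hrowU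
  have hU2 : Hc N * U = U := Hc_mul U hcolU
  have hU3 : Uᵀ * Hc N = Uᵀ := by
    rw [← Hc_symm, ← Matrix.transpose_mul, hU2]
  have hU4 : Hc N * Uᵀ = Uᵀ := by
    rw [← Hc_symm, ← Matrix.transpose_mul, hU1]
  -- nonnegativity of trace (Uᵀ C U C)
  have hkey : 0 ≤ Matrix.trace (Uᵀ * C * U * C) := by
    rcases hdef with hpos | hneg
    · rw [← trace_collapse C U hU1 hU2 hU3 hU4]
      exact key_nonneg _ (cpd_psd hN C hsym hpos) U
    · have hpos : ∀ x : Fin N → ℝ, (∑ i, x i) = 0 → 0 ≤ x ⬝ᵥ (-C).mulVec x := by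
        intro x hx
        rw [Matrix.neg_mulVec, dotProduct_neg]
        linarith [hneg x hx]
      have hsym' : (-C)ᵀ = -C := by rw [Matrix.transpose_neg, hsym]
      have h0 := key_nonneg _ (cpd_psd hN (-C) hsym' hpos) U
      rw [trace_collapse (-C) U hU1 hU2 hU3 hU4] at h0
      have : Uᵀ * -C * U * -C = Uᵀ * C * U * C := by
        simp [Matrix.mul_neg, Matrix.neg_mul]
      rwa [this] at h0
  -- expansion
  have hswap : Matrix.trace (Qᵀ * C * P * C) = Matrix.trace (Pᵀ * C * Q * C) := by
    rw [← Matrix.trace_transpose (Qᵀ * C * P * C)]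
    simp only [Matrix.transpose_mul, Matrix.transpose_transpose, hsym]
    rw [Matrix.trace_mul_cycle]
    simp [mul_assoc]
  have hexp : Matrix.trace (Uᵀ * C * U * C)
      = Matrix.trace (Pᵀ * C * P * C) - 2 * Matrix.trace (Pᵀ * C * Q * C)
        + Matrix.trace (Qᵀ * C * Q * C) := by
    have : Uᵀ * C * U * C = Pᵀ * C * P * C - Pᵀ * C * Q * C - Qᵀ * C * P * C
        + Qᵀ * C * Q * C := by
      simp only [hU, Matrix.transpose_sub, Matrix.sub_mul, Matrix.mul_sub]
      abel
    rw [this]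
    simp only [Matrix.trace_add, Matrix.trace_sub]
    rw [hswap]; ring
  linarith [hkey, hexp]
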